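/- The vertex-edge coloring number of complete graphs is unbounded: for every s ∈ ℕ there exists n ∈ ℕ such that col_ve(K_n) ≥ s, where K_n denotes the complete graph on n vertices. -/

import Mathlib

namespace VEGame

open Classical


variable {V : Type*}

/-- The set of vertices marked after Alice's first `r` moves. -/
def mVerts (a : ℕ → V) (r : ℕ) : Set V := {v | ∃ i < r, a i = v}

/-- The set of edges marked after Bob's first `r` moves. -/
def mEdges (b : ℕ → Sym2 V) (r : ℕ) : Set (Sym2 V) := {e | ∃ i < r, b i = e}

/-- Alice's sequence of moves is legal: whenever an unmarked vertex remains, she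
marks a previously unmarked vertex.  (If no unmarked vertex remains the game has
ended; the remaining values of `a` are irrelevant, as they do not change the set
of marked vertices.) -/
def AliceLegal (a : ℕ → V) : Prop :=
  ∀ r, (∃ v, v ∉ mVerts a r) → a r ∉ mVerts a r

/-- Bob's sequence of moves is legal: whenever an unmarked edge of `G` remains,
he marks a previously unmarked edge of `G`. -/
def BobLegal (G : SimpleGraph V) (b : ℕ → Sym2 V) : Prop :=
  ∀ r, (∃ e ∈ G.edgeSet, e ∉ mEdges b r) → b r ∈ G.edgeSet ∧ b r ∉ mEdges b r

/-- The score of vertex `v` at the end of round `r` (rounds are numbered from 0):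
`0` if `v` is marked, and otherwise the number of marked edges incident to `v`. -/
noncomputable def score (G : SimpleGraph V) (a : ℕ → V) (b : ℕ → Sym2 V)
    (r : ℕ) (v : V) : ℕ∞ :=
  if v ∈ mVerts a (r + 1) then 0
  else {e | e ∈ G.edgeSet ∧ v ∈ e ∧ e ∈ mEdges b (r + 1)}.encard

/-- `a` is the sequence of Alice's moves when she follows strategy `A`
(a function of the history, i.e. of Bob's moves so far). -/
def ConsistentA (A : List (Sym2 V) → V) (a : ℕ → V) (b : ℕ → Sym2 V) : Prop :=
  ∀ r, a r = A (List.ofFn fun i : Fin r => b i)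

/-- `b` is the sequence of Bob's moves when he follows strategy `B`
(a function of the history, i.e. of Alice's moves so far). -/
def ConsistentB (B : List V → Sym2 V) (a : ℕ → V) (b : ℕ → Sym2 V) : Prop :=
  ∀ r, b r = B (List.ofFn fun i : Fin (r + 1) => a i)

/-- Bob has a winning strategy for score `s`: a legal strategy which, against
every legal play of Alice, forces some round and some vertex to have score at
least `s`. -/
def BobWins (G : SimpleGraph V) (s : ℕ) : Prop :=
  ∃ B : List V → Sym2 V,
    (∀ a b, ConsistentB B a b → AliceLegal a → BobLegal G b) ∧
    (∀ a b, ConsistentB B a b → AliceLegal a →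
      ∃ r v, (s : ℕ∞) ≤ score G a b r v)

/-- The vertex-edge coloring number of `G`: one plus the supremum of all scores
for which Bob has a winning strategy. -/
noncomputable def colVE (G : SimpleGraph V) : ℕ∞ :=
  (⨆ s ∈ {s : ℕ | BobWins G s}, (s : ℕ∞)) + 1

end VEGame

open VEGame

namespace VEProof

open Finset

variable (t : ℕ)

def m0 : ℕ := 4 ^ (t + 2)

def nn : ℕ := m0 t * m0 t + m0 t + 5

abbrev VX := Fin (nn t)

instance : NeZero (nn t) := ⟨by unfold nn; omega⟩

def P0 : Finset (VX t) :=
  (Finset.range (m0 t)).attachFin (fun m hm => by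
    rw [Finset.mem_range] at hm; unfold nn; omega)

lemma card_P0 : (P0 t).card = m0 t := by
  rw [P0, Finset.card_attachFin, Finset.card_range]

lemma mem_P0 {v : VX t} : v ∈ P0 t ↔ (v : ℕ) < m0 t := by
  rw [P0, Finset.mem_attachFin, Finset.mem_range]

structure MS where
  A : Finset (VX t)
  H : Finset (Sym2 (VX t))
  k : ℕ
  P : Finset (VX t)
  Q : Finset (VX t × VX t)
  won : Bool
  mv : Sym2 (VX t)

variable {t}

/-- count of alive members of a pair -/
def cnt (A : Finset (VX t)) (q : VX t × VX t) : ℕ :=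
  (if q.1 ∈ A then 0 else 1) + (if q.2 ∈ A then 0 else 1)

def Lam (A : Finset (VX t)) (k : ℕ) (P : Finset (VX t)) (Q : Finset (VX t × VX t)) : ℕ :=
  2 * 4 ^ k * P.card + 4 ^ (k + 1) * ∑ q ∈ Q, cnt A q

def degH (H : Finset (Sym2 (VX t))) (x : VX t) : ℕ :=
  (H.filter (fun e => x ∈ e)).card

def pick (A : Finset (VX t)) (q : VX t × VX t) : VX t :=
  if q.1 ∈ A then q.2 else q.1

def promote (A : Finset (VX t)) (Q : Finset (VX t × VX t)) : Finset (VX t) :=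
  (Q.filter (fun q => q.1 ∉ A ∨ q.2 ∉ A)).image (pick A)

variable (t)

def chain (A : Finset (VX t)) : ℕ → ℕ × Finset (VX t) × Finset (VX t × VX t) →
    ℕ × Finset (VX t) × Finset (VX t × VX t)
  | 0, y => y
  | (f + 1), y =>
    if y.1 + 2 ≤ t ∧ y.2.1.card ≤ 1 then chain A f (y.1 + 1, promote A y.2.2, ∅) else y

end VEProof

namespace VEProof
open Finset
variable (t : ℕ)

noncomputable section

def junkV : VX t := Classical.arbitrary (VX t)

/-- default move: any non-diagonal unmarked edge if one exists -/
def dmv (H : Finset (Sym2 (VX t))) : Sym2 (VX t) :=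
  if h : ((Finset.univ : Finset (Sym2 (VX t))).filter (fun e => ¬ e.IsDiag ∧ e ∉ H)).Nonempty
  then h.choose else s(junkV t, junkV t)

def pairsF (P : Finset (VX t)) (H : Finset (Sym2 (VX t))) : Finset (VX t × VX t) :=
  (P ×ˢ P).filter (fun p => p.1 ≠ p.2 ∧ s(p.1, p.2) ∉ H)

def wpairsF (P A : Finset (VX t)) (H : Finset (Sym2 (VX t))) : Finset (VX t × VX t) :=
  (P ×ˢ (Finset.univ \ A)).filter (fun p => p.1 ≠ p.2 ∧ s(p.1, p.2) ∉ H)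

structure Core where
  mv : Sym2 (VX t)
  k : ℕ
  P : Finset (VX t)
  Q : Finset (VX t × VX t)
  won : Bool

def chn (st : MS t) (x : VX t) : ℕ × Finset (VX t) × Finset (VX t × VX t) :=
  chain t (insert x st.A) t (st.k, st.P.erase x, st.Q)

def stepCore (st : MS t) (x : VX t) : Core t :=
  if st.won then ⟨dmv t st.H, st.k, ∅, ∅, true⟩
  else
    if (chn t st x).1 + 2 ≤ t then
      (if h : (pairsF t (chn t st x).2.1 st.H).Nonempty then
        ⟨s(h.choose.1, h.choose.2), (chn t st x).1,
          ((chn t st x).2.1.erase h.choose.1).erase h.choose.2,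
          insert h.choose (chn t st x).2.2, false⟩
      else ⟨dmv t st.H, (chn t st x).1, ∅, ∅, true⟩)
    else
      (if h : (wpairsF t (chn t st x).2.1 (insert x st.A) st.H).Nonempty then
        ⟨s(h.choose.1, h.choose.2), (chn t st x).1, ∅, ∅, true⟩
      else ⟨dmv t st.H, (chn t st x).1, ∅, ∅, true⟩)

def step (st : MS t) (x : VX t) : MS t :=
  ⟨insert x st.A, insert (stepCore t st x).mv st.H, (stepCore t st x).k,
    (stepCore t st x).P, (stepCore t st x).Q, (stepCore t st x).won, (stepCore t st x).mv⟩

def initS : MS t := ⟨∅, ∅, 0, P0 t, ∅, false, s(junkV t, junkV t)⟩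

@[simp] lemma step_A (st : MS t) (x : VX t) : (step t st x).A = insert x st.A := rfl
@[simp] lemma step_H (st : MS t) (x : VX t) :
    (step t st x).H = insert (step t st x).mv st.H := rfl

end
end VEProof

namespace VEProof
open Finset
variable (t : ℕ)

/-- The mid-step invariant, parametrized by potential slack `c`. -/
structure Mid (c : ℕ) (A : Finset (VX t)) (H : Finset (Sym2 (VX t))) (k : ℕ)
    (P : Finset (VX t)) (Q : Finset (VX t × VX t)) (rH rA : ℕ) : Prop where
  hEdges : ∀ e ∈ H, ∃ u v : VX t, u ∈ P0 t ∧ v ∈ P0 t ∧ u ≠ v ∧ e = s(u, v)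
  hHcard : H.card = rH
  hAcard : A.card ≤ rA
  hPsub : P ⊆ P0 t
  hQsub : ∀ q ∈ Q, q.1 ∈ P0 t ∧ q.2 ∈ P0 t
  hPA : ∀ x ∈ P, x ∉ A
  hQne : ∀ q ∈ Q, q.1 ≠ q.2
  hQP : ∀ q ∈ Q, q.1 ∉ P ∧ q.2 ∉ P
  hQQ : ∀ q ∈ Q, ∀ q' ∈ Q, q ≠ q' →
    q.1 ≠ q'.1 ∧ q.1 ≠ q'.2 ∧ q.2 ≠ q'.1 ∧ q.2 ≠ q'.2
  hAdj : ∀ x y, (x ∈ P ∨ ∃ q ∈ Q, x = q.1 ∨ x = q.2) →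
    (y ∈ P ∨ ∃ q ∈ Q, y = q.1 ∨ y = q.2) → s(x, y) ∈ H →
    ∃ q ∈ Q, (x = q.1 ∧ y = q.2) ∨ (x = q.2 ∧ y = q.1)
  hdegP : ∀ x ∈ P, degH H x = k
  hdegQ : ∀ q ∈ Q, degH H q.1 = k + 1 ∧ degH H q.2 = k + 1
  hk : k + 1 ≤ t
  hktop : k + 1 = t → Q = ∅
  hpot : 2 * m0 t ≤ Lam A k P Q + c * 4 ^ (k + 1)

def Inv (st : MS t) (r : ℕ) : Prop :=
  Mid t 2 st.A st.H st.k st.P st.Q r r ∧ st.won = false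

lemma inv_init (ht : 1 ≤ t) : Inv t (initS t) 0 := by
  refine ⟨⟨?_, ?_, ?_, ?_, ?_, ?_, ?_, ?_, ?_, ?_, ?_, ?_, ?_, ?_, ?_⟩, rfl⟩ <;>
    simp [initS, degH, Lam, card_P0, ht]

variable {t} in
lemma degH_insert_of_not_mem {H : Finset (Sym2 (VX t))} {e : Sym2 (VX t)} {x : VX t}
    (hx : x ∉ e) : degH (insert e H) x = degH H x := by
  rw [degH, degH, Finset.filter_insert, if_neg hx]

variable {t} in
lemma degH_insert_of_mem {H : Finset (Sym2 (VX t))} {e : Sym2 (VX t)} {x : VX t}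
    (he : e ∉ H) (hx : x ∈ e) : degH (insert e H) x = degH H x + 1 := by
  rw [degH, degH, Finset.filter_insert, if_pos hx,
    Finset.card_insert_of_notMem (fun hc => he (Finset.mem_of_mem_filter e hc))]

variable {t} in
lemma prune {A H k P Q rH rA} (hI : Mid t 2 A H k P Q rH rA) (x : VX t) :
    Mid t 3 (insert x A) H k (P.erase x) Q rH (rA + 1) := by
  obtain ⟨hEdges, hHcard, hAcard, hPsub, hQsub, hPA, hQne, hQP, hQQ, hAdj,
    hdegP, hdegQ, hk, hktop, hpot⟩ := hI
  refine ⟨hEdges, hHcard, ?_, ?_, hQsub, ?_, hQne, ?_, hQQ, ?_, ?_, hdegQ, hk, hktop, ?_⟩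
  · exact le_trans (Finset.card_insert_le x A) (by omega)
  · exact (Finset.erase_subset x P).trans hPsub
  · intro y hy
    have h1 := Finset.ne_of_mem_erase hy
    have h2 := hPA y (Finset.mem_of_mem_erase hy)
    simp [Finset.mem_insert, h1, h2]
  · intro q hq
    exact ⟨fun h => (hQP q hq).1 (Finset.mem_of_mem_erase h),
      fun h => (hQP q hq).2 (Finset.mem_of_mem_erase h)⟩
  · intro x' y' hx' hy' hxy
    refine hAdj x' y' ?_ ?_ hxy
    · rcases hx' with h | h
      · exact Or.inl (Finset.mem_of_mem_erase h)
      · exact Or.inr h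
    · rcases hy' with h | h
      · exact Or.inl (Finset.mem_of_mem_erase h)
      · exact Or.inr h
  · intro x' hx'
    exact hdegP x' (Finset.mem_of_mem_erase hx')
  · rw [Lam] at hpot ⊢
    by_cases hx : x ∈ P
    · have hsum : ∑ q ∈ Q, cnt (insert x A) q = ∑ q ∈ Q, cnt A q := by
        refine Finset.sum_congr rfl (fun q hq => ?_)
        have h1 : q.1 ≠ x := fun h => (hQP q hq).1 (h ▸ hx)
        have h2 : q.2 ≠ x := fun h => (hQP q hq).2 (h ▸ hx)
        simp [cnt, Finset.mem_insert, h1, h2]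
      have hcard : (P.erase x).card + 1 = P.card := Finset.card_erase_add_one hx
      rw [hsum]
      have h4 : (4:ℕ)^(k+1) = 4*4^k := by ring
      calc 2 * m0 t ≤ 2*4^k*P.card + 4^(k+1) * ∑ q ∈ Q, cnt A q + 2*4^(k+1) := hpot
        _ = 2*4^k*((P.erase x).card + 1) + 4^(k+1) * ∑ q ∈ Q, cnt A q + 2*4^(k+1) := by
            rw [hcard]
        _ = 2*4^k*(P.erase x).card + 4^(k+1) * ∑ q ∈ Q, cnt A q + (2*4^k + 2*4^(k+1)) := by
            ring
        _ ≤ 2*4^k*(P.erase x).card + 4^(k+1) * ∑ q ∈ Q, cnt A q + 3*4^(k+1) := by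
            refine Nat.add_le_add_left ?_ _
            rw [h4]; omega
    · have hPe : P.erase x = P := Finset.erase_eq_of_notMem hx
      have comp : ∀ y : VX t, (if y ∈ A then (0:ℕ) else 1) ≤
          (if y ∈ insert x A then (0:ℕ) else 1) + (if x = y then 1 else 0) := by
        intro y
        by_cases hxy : x = y
        · subst hxy
          rw [if_pos (Finset.mem_insert_self x A), if_pos rfl]
          split_ifs <;> omega
        · have hyx : ¬ y = x := fun h => hxy h.symm
          rw [if_neg hxy]
          simp only [Finset.mem_insert, hyx, false_or, add_zero]
          exact le_rfl
      have hxq : ∀ q ∈ Q, cnt A q ≤ cnt (insert x A) q + (if x = q.1 ∨ x = q.2 then 1 else 0) := by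
        intro q hq
        have hne := hQne q hq
        have hii : (if x = q.1 then (1:ℕ) else 0) + (if x = q.2 then 1 else 0)
            = (if x = q.1 ∨ x = q.2 then 1 else 0) := by
          by_cases h1 : x = q.1
          · have h2 : ¬ x = q.2 := fun h2 => hne (h1.symm.trans h2)
            rw [if_pos h1, if_neg h2, if_pos (Or.inl h1)]
          · by_cases h2 : x = q.2
            · rw [if_neg h1, if_pos h2, if_pos (Or.inr h2)]
            · rw [if_neg h1, if_neg h2, if_neg (by rintro (h | h) <;> [exact h1 h; exact h2 h])]
        calc cnt A q = (if q.1 ∈ A then 0 else 1) + (if q.2 ∈ A then 0 else 1) := by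
              simp only [cnt]
          _ ≤ ((if q.1 ∈ insert x A then 0 else 1) + (if x = q.1 then 1 else 0)) +
              ((if q.2 ∈ insert x A then 0 else 1) + (if x = q.2 then 1 else 0)) :=
            add_le_add (comp q.1) (comp q.2)
          _ = cnt (insert x A) q + ((if x = q.1 then 1 else 0) + (if x = q.2 then 1 else 0)) := by
              simp only [cnt]; ring
          _ = _ := by rw [hii]
      have hsum1 : ∑ q ∈ Q, cnt A q ≤ (∑ q ∈ Q, cnt (insert x A) q) + 1 := by
        calc ∑ q ∈ Q, cnt A q
            ≤ ∑ q ∈ Q, (cnt (insert x A) q + if x = q.1 ∨ x = q.2 then 1 else 0) :=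
              Finset.sum_le_sum hxq
          _ = (∑ q ∈ Q, cnt (insert x A) q) + ∑ q ∈ Q, (if x = q.1 ∨ x = q.2 then (1:ℕ) else 0) :=
              Finset.sum_add_distrib
          _ ≤ (∑ q ∈ Q, cnt (insert x A) q) + 1 := by
              have he : (∑ q ∈ Q, if x = q.1 ∨ x = q.2 then (1:ℕ) else 0)
                  = (Q.filter (fun q => x = q.1 ∨ x = q.2)).card := by
                rw [Finset.card_filter]
              have hle1 : (Q.filter (fun q => x = q.1 ∨ x = q.2)).card ≤ 1 := by
                rw [Finset.card_le_one]
                intro q hq q' hq'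
                rw [Finset.mem_filter] at hq hq'
                by_contra hne2
                obtain ⟨n1, n2, n3, n4⟩ := hQQ q hq.1 q' hq'.1 hne2
                rcases hq.2 with h | h <;> rcases hq'.2 with h' | h'
                · exact n1 (h.symm.trans h')
                · exact n2 (h.symm.trans h')
                · exact n3 (h.symm.trans h')
                · exact n4 (h.symm.trans h')
              omega
      rw [hPe]
      calc 2 * m0 t ≤ 2*4^k*P.card + 4^(k+1) * ∑ q ∈ Q, cnt A q + 2*4^(k+1) := hpot
        _ ≤ 2*4^k*P.card + 4^(k+1) * ((∑ q ∈ Q, cnt (insert x A) q) + 1) + 2*4^(k+1) := by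
            gcongr
        _ = 2*4^k*P.card + 4^(k+1) * (∑ q ∈ Q, cnt (insert x A) q) + 3*4^(k+1) := by
            ring

variable {t} in
lemma mem_promote {A : Finset (VX t)} {Q : Finset (VX t × VX t)} {z : VX t}
    (hz : z ∈ promote A Q) :
    ∃ q ∈ Q, (z = q.1 ∨ z = q.2) ∧ z ∉ A ∧ z = pick A q ∧ (q.1 ∉ A ∨ q.2 ∉ A) := by
  rw [promote, Finset.mem_image] at hz
  obtain ⟨q, hq, rfl⟩ := hz
  rw [Finset.mem_filter] at hq
  refine ⟨q, hq.1, ?_, ?_, rfl, hq.2⟩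
  · rw [pick]; split_ifs <;> [exact Or.inr rfl; exact Or.inl rfl]
  · rw [pick]; split_ifs with h
    · rcases hq.2 with h' | h' <;> [exact absurd h h'; exact h']
    · exact h

variable {t} in
lemma chainstep {A H k P Q rH rA} (hM : Mid t 3 A H k P Q rH rA)
    (hk2 : k + 2 ≤ t) (hP : P.card ≤ 1) :
    Mid t 3 A H (k + 1) (promote A Q) ∅ rH rA := by
  obtain ⟨hEdges, hHcard, hAcard, hPsub, hQsub, hPA, hQne, hQP, hQQ, hAdj,
    hdegP, hdegQ, hk, hktop, hpot⟩ := hM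
  have hsame : ∀ z ∈ promote A Q, ∀ q ∈ Q, (z = q.1 ∨ z = q.2) →
      ∀ q' ∈ Q, (z = q'.1 ∨ z = q'.2) → q = q' := by
    intro z _ q hq hzq q' hq' hzq'
    by_contra hne
    obtain ⟨n1, n2, n3, n4⟩ := hQQ q hq q' hq' hne
    rcases hzq with h | h <;> rcases hzq' with h' | h'
    · exact n1 (h.symm.trans h')
    · exact n2 (h.symm.trans h')
    · exact n3 (h.symm.trans h')
    · exact n4 (h.symm.trans h')
  refine ⟨hEdges, hHcard, hAcard, ?_, by simp, ?_, by simp, by simp, by simp, ?_, ?_, by simp,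
    by omega, fun _ => rfl, ?_⟩
  · -- promote ⊆ P0
    intro z hz
    obtain ⟨q, hq, hzq, -, -, -⟩ := mem_promote hz
    rcases hzq with h | h
    · exact h ▸ (hQsub q hq).1
    · exact h ▸ (hQsub q hq).2
  · -- alive
    intro z hz
    obtain ⟨-, -, -, h, -, -⟩ := mem_promote hz
    exact h
  · -- non-adjacency
    intro x y hx hy hxy
    exfalso
    have hx' : x ∈ promote A Q := by
      rcases hx with h | h; exact h; simpa using h
    have hy' : y ∈ promote A Q := by
      rcases hy with h | h; exact h; simpa using h
    obtain ⟨qx, hqx, hxq, -, hxp, -⟩ := mem_promote hx'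
    obtain ⟨qy, hqy, hyq, -, hyp, -⟩ := mem_promote hy'
    obtain ⟨q, hq, hcase⟩ := hAdj x y (Or.inr ⟨qx, hqx, hxq⟩) (Or.inr ⟨qy, hqy, hyq⟩) hxy
    have hxq2 : x = q.1 ∨ x = q.2 := by
      rcases hcase with ⟨h1, h2⟩ | ⟨h1, h2⟩ <;> [exact Or.inl h1; exact Or.inr h1]
    have hyq2 : y = q.1 ∨ y = q.2 := by
      rcases hcase with ⟨h1, h2⟩ | ⟨h1, h2⟩ <;> [exact Or.inr h2; exact Or.inl h2]
    have e1 : qx = q := hsame x hx' qx hqx hxq q hq hxq2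
    have e2 : qy = q := hsame y hy' qy hqy hyq q hq hyq2
    have exy : x = y := by rw [hxp, hyp, e1, e2]
    have hne := hQne q hq
    rcases hcase with ⟨h1, h2⟩ | ⟨h1, h2⟩
    · exact hne (h1 ▸ h2 ▸ exy)
    · exact hne (h2 ▸ h1 ▸ exy.symm)
  · -- degrees
    intro z hz
    obtain ⟨q, hq, hzq, -, -, -⟩ := mem_promote hz
    rcases hzq with h | h
    · exact h ▸ (hdegQ q hq).1
    · exact h ▸ (hdegQ q hq).2
  · -- potential
    have hS : ∑ q ∈ Q, cnt A q ≤ 2 * (promote A Q).card := by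
      have hfil : ∑ q ∈ Q, cnt A q
          = ∑ q ∈ Q.filter (fun q => q.1 ∉ A ∨ q.2 ∉ A), cnt A q := by
        refine (Finset.sum_filter_of_ne ?_).symm
        intro q hq hcnt
        by_contra hcon
        push_neg at hcon
        simp [cnt, hcon.1, hcon.2] at hcnt
      have hbound : ∑ q ∈ Q.filter (fun q => q.1 ∉ A ∨ q.2 ∉ A), cnt A q
          ≤ 2 * (Q.filter (fun q => q.1 ∉ A ∨ q.2 ∉ A)).card := by
        have := Finset.sum_le_card_nsmul (Q.filter (fun q => q.1 ∉ A ∨ q.2 ∉ A)) (cnt A) 2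
          (fun q _ => by simp only [cnt]; split_ifs <;> omega)
        simpa [smul_eq_mul, mul_comm] using this
      have hcard : (Q.filter (fun q => q.1 ∉ A ∨ q.2 ∉ A)).card = (promote A Q).card := by
        rw [promote]
        refine (Finset.card_image_of_injOn ?_).symm
        intro q hq q' hq' hpq
        rw [Finset.mem_coe, Finset.mem_filter] at hq hq'
        by_contra hne
        obtain ⟨n1, n2, n3, n4⟩ := hQQ q hq.1 q' hq'.1 hne
        have h1 : pick A q = q.1 ∨ pick A q = q.2 := by
          rw [pick]; split_ifs <;> [exact Or.inr rfl; exact Or.inl rfl]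
        have h2 : pick A q' = q'.1 ∨ pick A q' = q'.2 := by
          rw [pick]; split_ifs <;> [exact Or.inr rfl; exact Or.inl rfl]
        rw [hpq] at h1
        rcases h1 with h | h <;> rcases h2 with h' | h'
        · exact n1 (h.symm.trans h')
        · exact n2 (h.symm.trans h')
        · exact n3 (h.symm.trans h')
        · exact n4 (h.symm.trans h')
      omega
    rw [Lam] at hpot ⊢
    rw [Finset.sum_empty]
    have h1 : (4:ℕ)^(k+1) = 4*4^k := by ring
    have h2 : (4:ℕ)^(k+1+1) = 16*4^k := by ring
    have hPP : 2*4^k*P.card ≤ 2*4^k := by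
      have := Nat.mul_le_mul_left (2*4^k) hP
      simpa using this
    calc 2 * m0 t ≤ 2*4^k*P.card + 4^(k+1) * ∑ q ∈ Q, cnt A q + 3*4^(k+1) := hpot
      _ ≤ 2*4^k + 4^(k+1) * (2 * (promote A Q).card) + 3*4^(k+1) :=
        add_le_add (add_le_add hPP (Nat.mul_le_mul_left _ hS)) le_rfl
      _ ≤ 2*4^(k+1)*(promote A Q).card + 4^(k+1+1)*0 + 3*4^(k+1+1) := by
        rw [h1, h2]
        have : 4*4^k * (2 * (promote A Q).card) = 2*(4*4^k)*(promote A Q).card := by ring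
        rw [this]
        have hX : 1 ≤ 4^k := Nat.one_le_pow _ _ (by norm_num)
        omega
      _ = 2*4^(k+1)*(promote A Q).card + 4^(k+1+1) * ∑ q ∈ (∅ : Finset (VX t × VX t)), cnt A q
          + 3*4^(k+1+1) := by simp

variable {t} in
lemma chain_spec {A H rH rA} (f : ℕ) (k : ℕ) (P : Finset (VX t)) (Q : Finset (VX t × VX t))
    (hM : Mid t 3 A H k P Q rH rA) (hfuel : t ≤ k + 1 + f) :
    Mid t 3 A H (chain t A f (k, P, Q)).1 (chain t A f (k, P, Q)).2.1 (chain t A f (k, P, Q)).2.2 rH rA ∧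
      (((chain t A f (k, P, Q)).1 + 2 ≤ t ∧ 2 ≤ (chain t A f (k, P, Q)).2.1.card) ∨
        ((chain t A f (k, P, Q)).1 + 1 = t ∧ (chain t A f (k, P, Q)).2.2 = ∅)) := by
  induction f generalizing k P Q with
  | zero =>
    have hkt : k + 1 = t := by have := hM.hk; simp at hfuel; omega
    exact ⟨hM, Or.inr ⟨hkt, hM.hktop hkt⟩⟩
  | succ f ih =>
    rw [chain]
    by_cases hc : k + 2 ≤ t ∧ P.card ≤ 1
    · rw [if_pos (by simpa using hc)]
      exact ih (k + 1) (promote A Q) ∅ (chainstep hM hc.1 hc.2) (by omega)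
    · rw [if_neg (by simpa using hc)]
      push_neg at hc
      by_cases hk2 : k + 2 ≤ t
      · exact ⟨hM, Or.inl ⟨hk2, hc hk2⟩⟩
      · have hkt : k + 1 = t := by have := hM.hk; omega
        exact ⟨hM, Or.inr ⟨hkt, hM.hktop hkt⟩⟩

/-- certificate that the state records a win -/
def Won (st : MS t) : Prop :=
  ∃ u : VX t, u ∉ st.A ∧ (∀ e ∈ st.H, ¬ e.IsDiag) ∧ t ≤ degH st.H u

variable {t} in
lemma H_sub_P0 {H : Finset (Sym2 (VX t))}
    (hEdges : ∀ e ∈ H, ∃ u v : VX t, u ∈ P0 t ∧ v ∈ P0 t ∧ u ≠ v ∧ e = s(u, v)) :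
    H.card ≤ m0 t * m0 t := by
  have hsub : H ⊆ (P0 t ×ˢ P0 t).image (fun q : VX t × VX t => s(q.1, q.2)) := by
    intro e he
    obtain ⟨u, v, hu, hv, -, rfl⟩ := hEdges e he
    exact Finset.mem_image.mpr ⟨(u, v), Finset.mem_product.mpr ⟨hu, hv⟩, rfl⟩
  have h1 := Finset.card_le_card hsub
  have h2 := Finset.card_image_le (s := P0 t ×ˢ P0 t)
    (f := fun q : VX t × VX t => s(q.1, q.2))
  rw [Finset.card_product, card_P0] at h2
  omega

lemma step_spec (st : MS t) (x : VX t) (r : ℕ) (hI : Inv t st r) :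
    Inv t (step t st x) (r + 1) ∨ Won t (step t st x) := by
  obtain ⟨hM0, hwon⟩ := hI
  have hB : ¬ (st.won = true) := by simp [hwon]
  have hM1 := prune hM0 x
  have hcs := chain_spec t st.k (st.P.erase x) st.Q hM1 (by omega)
  have hchn : chn t st x = chain t (insert x st.A) t (st.k, st.P.erase x, st.Q) := rfl
  rw [← hchn] at hcs
  obtain ⟨hM2, hexit⟩ := hcs
  obtain ⟨hEdges, hHcard, hAcard, hPsub, hQsub, hPA, hQne, hQP, hQQ, hAdj,
    hdegP, hdegQ, hk, hktop, hpot⟩ := hM2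
  rcases hexit with ⟨hk2, hcard2⟩ | ⟨hk1, hQe⟩
  · -- pairing branch
    obtain ⟨u, hu, v, hv, huv⟩ := Finset.one_lt_card.mp (by omega : 1 < (chn t st x).2.1.card)
    have hnotH : s(u, v) ∉ st.H := by
      intro hin
      obtain ⟨q, hq, hcase⟩ := hAdj u v (Or.inl hu) (Or.inl hv) hin
      rcases hcase with ⟨h1, -⟩ | ⟨h1, -⟩
      · exact (hQP q hq).1 (h1 ▸ hu)
      · exact (hQP q hq).2 (h1 ▸ hu)
    have hpp : (pairsF t (chn t st x).2.1 st.H).Nonempty :=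
      ⟨(u, v), Finset.mem_filter.mpr ⟨Finset.mem_product.mpr ⟨hu, hv⟩, huv, hnotH⟩⟩
    have hcore : stepCore t st x = ⟨s(hpp.choose.1, hpp.choose.2), (chn t st x).1,
        (((chn t st x).2.1.erase hpp.choose.1).erase hpp.choose.2),
        insert hpp.choose (chn t st x).2.2, false⟩ := by
      rw [stepCore, if_neg hB, if_pos hk2, dif_pos hpp]
    have hp := hpp.choose_spec
    simp only [pairsF, Finset.mem_filter] at hp
    obtain ⟨hpmem, hpne, hpH⟩ := hp
    rw [Finset.mem_product] at hpmem
    obtain ⟨hp1, hp2⟩ := hpmem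
    set p := hpp.choose with hpdef
    have e1 : (step t st x).A = insert x st.A := rfl
    have e2 : (step t st x).H = insert (s(p.1, p.2)) st.H := by
      show insert (stepCore t st x).mv st.H = _; rw [hcore]
    have e3 : (step t st x).k = (chn t st x).1 := by
      show (stepCore t st x).k = _; rw [hcore]
    have e4 : (step t st x).P = (((chn t st x).2.1.erase p.1).erase p.2) := by
      show (stepCore t st x).P = _; rw [hcore]
    have e5 : (step t st x).Q = insert p (chn t st x).2.2 := by
      show (stepCore t st x).Q = _; rw [hcore]
    left
    refine ⟨?_, by show (stepCore t st x).won = false; rw [hcore]⟩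
    rw [e1, e2, e3, e4, e5]
    have hpQ : p ∉ (chn t st x).2.2 := fun hpQ => (hQP p hpQ).1 hp1
    refine ⟨?_, ?_, hAcard, ?_, ?_, ?_, ?_, ?_, ?_, ?_, ?_, ?_, ?_, ?_, ?_⟩
    · -- hEdges
      intro e he
      rcases Finset.mem_insert.mp he with rfl | he'
      · exact ⟨p.1, p.2, hPsub hp1, hPsub hp2, hpne, rfl⟩
      · exact hEdges e he'
    · rw [Finset.card_insert_of_notMem (show s(p.1, p.2) ∉ st.H from hpH), hHcard]
    · -- P'' ⊆ P0
      exact ((Finset.erase_subset _ _).trans (Finset.erase_subset _ _)).trans hPsub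
    · -- Q' ⊆ P0
      intro q hq
      rcases Finset.mem_insert.mp hq with rfl | hq'
      · exact ⟨hPsub hp1, hPsub hp2⟩
      · exact hQsub q hq'
    · -- alive
      intro z hz
      exact hPA z (Finset.mem_of_mem_erase (Finset.mem_of_mem_erase hz))
    · -- Qne
      intro q hq
      rcases Finset.mem_insert.mp hq with rfl | hq'
      · exact hpne
      · exact hQne q hq'
    · -- QP
      intro q hq
      rcases Finset.mem_insert.mp hq with rfl | hq'
      · constructor
        · exact fun h => Finset.notMem_erase p.1 _ (Finset.mem_of_mem_erase h)
        · exact fun h => Finset.notMem_erase p.2 _ h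
      · exact ⟨fun h => (hQP q hq').1 (Finset.mem_of_mem_erase (Finset.mem_of_mem_erase h)),
          fun h => (hQP q hq').2 (Finset.mem_of_mem_erase (Finset.mem_of_mem_erase h))⟩
    · -- QQ
      intro q hq q' hq' hne
      rcases Finset.mem_insert.mp hq with rfl | hq2 <;> rcases Finset.mem_insert.mp hq' with h' | hq2'
      · exact absurd h'.symm hne
      · refine ⟨fun h => (hQP q' hq2').1 (by rw [← h]; exact hp1),
          fun h => (hQP q' hq2').2 (by rw [← h]; exact hp1),
          fun h => (hQP q' hq2').1 (by rw [← h]; exact hp2),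
          fun h => (hQP q' hq2').2 (by rw [← h]; exact hp2)⟩
      · subst h'
        refine ⟨fun h => (hQP q hq2).1 (by rw [h]; exact hp1),
          fun h => (hQP q hq2).1 (by rw [h]; exact hp2),
          fun h => (hQP q hq2).2 (by rw [h]; exact hp1),
          fun h => (hQP q hq2).2 (by rw [h]; exact hp2)⟩
      · exact hQQ q hq2 q' hq2' hne
    · -- hAdj
      have htr : ∀ z : VX t, (z ∈ ((chn t st x).2.1.erase p.1).erase p.2 ∨
          ∃ q ∈ insert p (chn t st x).2.2, z = q.1 ∨ z = q.2) →
          (z ∈ (chn t st x).2.1 ∨ ∃ q ∈ (chn t st x).2.2, z = q.1 ∨ z = q.2) := by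
        intro z hz
        rcases hz with h | ⟨q, hq, hzq⟩
        · exact Or.inl (Finset.mem_of_mem_erase (Finset.mem_of_mem_erase h))
        · rcases Finset.mem_insert.mp hq with rfl | hq'
          · rcases hzq with rfl | rfl
            · exact Or.inl hp1
            · exact Or.inl hp2
          · exact Or.inr ⟨q, hq', hzq⟩
      intro x' y' hx' hy' hxy
      rcases Finset.mem_insert.mp hxy with heq | hold
      · rw [Sym2.eq_iff] at heq
        rcases heq with ⟨h1, h2⟩ | ⟨h1, h2⟩
        · exact ⟨p, Finset.mem_insert_self _ _, Or.inl ⟨h1, h2⟩⟩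
        · exact ⟨p, Finset.mem_insert_self _ _, Or.inr ⟨h1, h2⟩⟩
      · obtain ⟨q, hq, hcase⟩ := hAdj x' y' (htr x' hx') (htr y' hy') hold
        exact ⟨q, Finset.mem_insert_of_mem hq, hcase⟩
    · -- degP
      intro z hz
      have hz2 : z ≠ p.2 := Finset.ne_of_mem_erase hz
      have hz1 : z ≠ p.1 := Finset.ne_of_mem_erase (Finset.mem_of_mem_erase hz)
      rw [degH_insert_of_not_mem (by rw [Sym2.mem_iff]; push_neg; exact ⟨hz1, hz2⟩)]
      exact hdegP z (Finset.mem_of_mem_erase (Finset.mem_of_mem_erase hz))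
    · -- degQ
      intro q hq
      rcases Finset.mem_insert.mp hq with h'' | hq'
      · rw [h'']
        constructor
        · rw [degH_insert_of_mem (show s(p.1, p.2) ∉ st.H from hpH) (Sym2.mem_mk_left _ _), hdegP p.1 hp1]
        · rw [degH_insert_of_mem (show s(p.1, p.2) ∉ st.H from hpH) (Sym2.mem_mk_right _ _), hdegP p.2 hp2]
      · have hne1 : q.1 ∉ s(p.1, p.2) := by
          rw [Sym2.mem_iff]; push_neg
          exact ⟨fun h => (hQP q hq').1 (h ▸ hp1), fun h => (hQP q hq').1 (h ▸ hp2)⟩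
        have hne2 : q.2 ∉ s(p.1, p.2) := by
          rw [Sym2.mem_iff]; push_neg
          exact ⟨fun h => (hQP q hq').2 (h ▸ hp1), fun h => (hQP q hq').2 (h ▸ hp2)⟩
        rw [degH_insert_of_not_mem hne1, degH_insert_of_not_mem hne2]
        exact hdegQ q hq'
    · -- hk
      omega
    · -- hktop
      intro h; omega
    · -- potential
      obtain ⟨m, hm⟩ : ∃ m, (chn t st x).2.1.card = m + 2 := ⟨(chn t st x).2.1.card - 2, by omega⟩
      have hc2 : (((chn t st x).2.1.erase p.1).erase p.2).card = m := by
        rw [Finset.card_erase_of_mem (show p.2 ∈ (chn t st x).2.1.erase p.1 from Finset.mem_erase.mpr ⟨fun h => hpne h.symm, hp2⟩),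
          Finset.card_erase_of_mem (show p.1 ∈ (chn t st x).2.1 from hp1), hm]
        omega
      have hcnt2 : cnt (insert x st.A) p = 2 := by
        simp [cnt, hPA p.1 hp1, hPA p.2 hp2]
      rw [Lam] at hpot ⊢
      rw [Finset.sum_insert hpQ, hc2, hcnt2]
      rw [hm] at hpot
      calc 2 * m0 t ≤ 2*4^((chn t st x).1)*(m+2)
            + 4^((chn t st x).1+1) * (∑ q ∈ (chn t st x).2.2, cnt (insert x st.A) q)
            + 3*4^((chn t st x).1+1) := hpot
        _ = 2*4^((chn t st x).1)*m
            + 4^((chn t st x).1+1) * (2 + ∑ q ∈ (chn t st x).2.2, cnt (insert x st.A) q)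
            + 2*4^((chn t st x).1+1) := by ring
  · -- winning branch
    have hX : 1 ≤ (4:ℕ)^(chn t st x).1 := Nat.one_le_pow _ _ (by norm_num)
    have hm0 : m0 t = 4^((chn t st x).1+3) := by
      rw [m0]; congr 1; omega
    have hpot2 := hpot
    rw [Lam, hQe, Finset.sum_empty, hm0] at hpot2
    have h64 : (4:ℕ)^((chn t st x).1+3) = 64*4^(chn t st x).1 := by ring
    have h4 : (4:ℕ)^((chn t st x).1+1) = 4*4^(chn t st x).1 := by ring
    have hPne : (chn t st x).2.1.Nonempty := by
      rw [← Finset.card_pos]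
      by_contra hc
      push_neg at hc
      have h0 : (chn t st x).2.1.card = 0 := by omega
      rw [h0] at hpot2
      simp only [Nat.mul_zero, Nat.zero_add, Nat.add_zero] at hpot2
      rw [h64, h4] at hpot2
      omega
    obtain ⟨u, hu⟩ := hPne
    -- find a fresh vertex
    have hrb : r ≤ m0 t * m0 t := by
      have := H_sub_P0 hEdges; omega
    obtain ⟨w, hwA, hwP0⟩ : ∃ w : VX t, w ∉ insert x st.A ∧ w ∉ P0 t := by
      by_contra hcon
      push_neg at hcon
      have huniv : (Finset.univ : Finset (VX t)) ⊆ insert x st.A ∪ P0 t := by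
        intro w _
        rcases Classical.em (w ∈ insert x st.A) with h | h
        · exact Finset.mem_union_left _ h
        · exact Finset.mem_union_right _ (hcon w h)
      have h1 := Finset.card_le_card huniv
      have h2 := Finset.card_union_le (insert x st.A) (P0 t)
      rw [Finset.card_univ, Fintype.card_fin] at h1
      rw [card_P0] at h2
      obtain ⟨M2, hM2e⟩ : ∃ y, m0 t * m0 t = y := ⟨_, rfl⟩
      have key : m0 t * m0 t + m0 t + 5 ≤ (insert x st.A).card + m0 t := by
        calc m0 t * m0 t + m0 t + 5 = nn t := rfl
          _ ≤ (insert x st.A ∪ P0 t).card := h1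
          _ ≤ _ := h2
      rw [hM2e] at key hrb
      omega
    have hwne : u ≠ w := fun h => hwP0 (h ▸ hPsub hu)
    have hwH : s(u, w) ∉ st.H := by
      intro hin
      obtain ⟨u', v', hu', hv', -, heq⟩ := hEdges _ hin
      have hwmem : w ∈ s(u', v') := by rw [← heq]; exact Sym2.mem_mk_right u w
      rw [Sym2.mem_iff] at hwmem
      rcases hwmem with rfl | rfl
      · exact hwP0 hu'
      · exact hwP0 hv'
    have hww : (wpairsF t (chn t st x).2.1 (insert x st.A) st.H).Nonempty :=
      ⟨(u, w), Finset.mem_filter.mpr ⟨Finset.mem_product.mpr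
        ⟨hu, Finset.mem_sdiff.mpr ⟨Finset.mem_univ w, hwA⟩⟩, hwne, hwH⟩⟩
    have hcore : stepCore t st x = ⟨s(hww.choose.1, hww.choose.2), (chn t st x).1, ∅, ∅, true⟩ := by
      rw [stepCore, if_neg hB, if_neg (by omega : ¬((chn t st x).1 + 2 ≤ t)), dif_pos hww]
    have hq := hww.choose_spec
    simp only [wpairsF, Finset.mem_filter] at hq
    obtain ⟨hqmem, hqne, hqH⟩ := hq
    rw [Finset.mem_product, Finset.mem_sdiff] at hqmem
    obtain ⟨hq1, -, hq2⟩ := hqmem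
    set p := hww.choose with hpdef
    right
    refine ⟨p.1, ?_, ?_, ?_⟩
    · show p.1 ∉ insert x st.A
      exact hPA p.1 hq1
    · -- all edges non-diagonal
      intro e he
      have he' : e ∈ insert (s(p.1, p.2)) st.H := by
        have : (step t st x).H = insert (s(p.1, p.2)) st.H := by
          show insert (stepCore t st x).mv st.H = _; rw [hcore]
        rw [← this]; exact he
      rcases Finset.mem_insert.mp he' with rfl | he2
      · rw [Sym2.mk_isDiag_iff]; exact hqne
      · obtain ⟨u', v', -, -, hne', rfl⟩ := hEdges _ he2
        rw [Sym2.mk_isDiag_iff]; exact hne'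
    · -- degree
      have hH' : (step t st x).H = insert (s(p.1, p.2)) st.H := by
        show insert (stepCore t st x).mv st.H = _; rw [hcore]
      rw [hH', degH_insert_of_mem (show s(p.1, p.2) ∉ st.H from hqH) (Sym2.mem_mk_left _ _), hdegP p.1 hq1]
      omega

/-- the strategy -/
noncomputable def BStrat : List (VX t) → Sym2 (VX t) := fun l => (l.foldl (step t) (initS t)).mv

section Play
variable (a : ℕ → VX t)

noncomputable def stAfter (r : ℕ) : MS t := (List.ofFn fun i : Fin (r + 1) => a i).foldl (step t) (initS t)

noncomputable def stBefore : ℕ → MS t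
  | 0 => initS t
  | (r + 1) => stAfter t a r

lemma stAfter_eq (r : ℕ) : stAfter t a r = step t (stBefore t a r) (a r) := by
  cases r with
  | zero => simp [stAfter, stBefore, List.ofFn_succ]
  | succ r =>
    show stAfter t a (r + 1) = step t (stAfter t a r) (a (r + 1))
    rw [stAfter, stAfter, List.ofFn_succ']
    simp [List.concat_eq_append, List.foldl_append]

variable (b : ℕ → Sym2 (VX t))

lemma bmv (hb : ConsistentB (BStrat t) a b) (r : ℕ) : b r = (stAfter t a r).mv := hb r

lemma mEdges_succ (r : ℕ) : mEdges b (r + 1) = insert (b r) (mEdges b r) := by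
  ext e
  simp only [mEdges, Set.mem_setOf_eq, Set.mem_insert_iff]
  constructor
  · rintro ⟨i, hi, rfl⟩
    rcases Nat.lt_succ_iff_lt_or_eq.mp hi with h | rfl
    · exact Or.inr ⟨i, h, rfl⟩
    · exact Or.inl rfl
  · rintro (rfl | ⟨i, hi, rfl⟩)
    · exact ⟨r, Nat.lt_succ_self r, rfl⟩
    · exact ⟨i, Nat.lt_succ_of_lt hi, rfl⟩

lemma mEdges_eq (hb : ConsistentB (BStrat t) a b) (r : ℕ) : mEdges b r = ↑(stBefore t a r).H := by
  induction r with
  | zero =>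
    ext e; simp [mEdges, stBefore, initS]
  | succ r ih =>
    rw [mEdges_succ, ih]
    show _ = ((stAfter t a r).H : Set (Sym2 (VX t)))
    rw [stAfter_eq, step_H, ← stAfter_eq, bmv t a b hb r]
    simp [stAfter_eq]

lemma mVerts_succ (r : ℕ) : mVerts a (r + 1) = insert (a r) (mVerts a r) := by
  ext v
  simp only [mVerts, Set.mem_setOf_eq, Set.mem_insert_iff]
  constructor
  · rintro ⟨i, hi, rfl⟩
    rcases Nat.lt_succ_iff_lt_or_eq.mp hi with h | rfl
    · exact Or.inr ⟨i, h, rfl⟩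
    · exact Or.inl rfl
  · rintro (rfl | ⟨i, hi, rfl⟩)
    · exact ⟨r, Nat.lt_succ_self r, rfl⟩
    · exact ⟨i, Nat.lt_succ_of_lt hi, rfl⟩

lemma mVerts_eq (r : ℕ) : mVerts a (r + 1) = ↑(stAfter t a r).A := by
  induction r with
  | zero =>
    rw [mVerts_succ, stAfter_eq]
    ext v; simp [mVerts, stBefore, initS, step_A]
  | succ r ih =>
    rw [mVerts_succ, ih, stAfter_eq t a (r + 1)]
    show _ = ((step t (stAfter t a r) (a (r + 1))).A : Set (VX t))
    rw [step_A]
    simp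

lemma dmv_spec (H : Finset (Sym2 (VX t))) (hex : ∃ e : Sym2 (VX t), ¬ e.IsDiag ∧ e ∉ H) :
    ¬ (dmv t H).IsDiag ∧ dmv t H ∉ H := by
  rw [dmv]
  split
  · next h =>
    have := h.choose_spec
    rw [Finset.mem_filter] at this
    exact this.2
  · next h =>
    exfalso
    obtain ⟨e, he1, he2⟩ := hex
    exact h ⟨e, Finset.mem_filter.mpr ⟨Finset.mem_univ e, he1, he2⟩⟩

lemma step_mv_legal (st : MS t) (x : VX t) (hex : ∃ e : Sym2 (VX t), ¬ e.IsDiag ∧ e ∉ st.H) :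
    ¬ (step t st x).mv.IsDiag ∧ (step t st x).mv ∉ st.H := by
  show ¬ (stepCore t st x).mv.IsDiag ∧ (stepCore t st x).mv ∉ st.H
  rw [stepCore]
  split
  · exact dmv_spec t st.H hex
  · split
    · split
      · next h =>
        have := h.choose_spec
        simp only [pairsF, Finset.mem_filter] at this
        exact ⟨by rw [Sym2.mk_isDiag_iff]; exact this.2.1, this.2.2⟩
      · exact dmv_spec t st.H hex
    · split
      · next h =>
        have := h.choose_spec
        simp only [wpairsF, Finset.mem_filter] at this
        exact ⟨by rw [Sym2.mk_isDiag_iff]; exact this.2.1, this.2.2⟩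
      · exact dmv_spec t st.H hex

lemma bob_legal (hb : ConsistentB (BStrat t) a b) : BobLegal (⊤ : SimpleGraph (VX t)) b := by
  intro r hex
  rw [mEdges_eq t a b hb r] at hex ⊢
  rw [bmv t a b hb r, stAfter_eq]
  obtain ⟨e, he1, he2⟩ := hex
  rw [SimpleGraph.edgeSet_top, Set.mem_compl_iff, Sym2.mem_diagSet] at he1
  have hex' : ∃ e : Sym2 (VX t), ¬ e.IsDiag ∧ e ∉ (stBefore t a r).H := by
    exact ⟨e, he1, by simpa using he2⟩
  have := step_mv_legal t (stBefore t a r) (a r) hex'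
  refine ⟨?_, by simpa using this.2⟩
  rw [SimpleGraph.edgeSet_top]
  exact this.1

lemma won_score (hb : ConsistentB (BStrat t) a b) {r : ℕ} (hw : Won t (stAfter t a r)) :
    ∃ r' v, (t : ℕ∞) ≤ score (⊤ : SimpleGraph (VX t)) a b r' v := by
  obtain ⟨u, huA, hdiag, hdeg⟩ := hw
  refine ⟨r, u, ?_⟩
  rw [score, if_neg (by rw [mVerts_eq]; simpa using huA)]
  have hme : mEdges b (r + 1) = ↑(stAfter t a r).H := mEdges_eq t a b hb (r + 1)
  have hset : {e | e ∈ (⊤ : SimpleGraph (VX t)).edgeSet ∧ u ∈ e ∧ e ∈ mEdges b (r + 1)} =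
      ↑((stAfter t a r).H.filter (fun e => u ∈ e)) := by
    ext e
    simp only [Set.mem_setOf_eq, hme, Finset.coe_filter, Set.mem_setOf_eq, Finset.mem_coe,
      SimpleGraph.edgeSet_top]
    constructor
    · rintro ⟨h1, h2, h3⟩; exact ⟨h3, h2⟩
    · rintro ⟨h1, h2⟩; exact ⟨hdiag e h1, h2, h1⟩
  rw [hset, Set.encard_coe_eq_coe_finsetCard]
  exact_mod_cast Nat.cast_le.mpr hdeg

lemma main_ind (hb : ConsistentB (BStrat t) a b) (ht : 1 ≤ t) (r : ℕ) :
    (∃ r' v, (t : ℕ∞) ≤ score (⊤ : SimpleGraph (VX t)) a b r' v) ∨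
      Inv t (stAfter t a r) (r + 1) := by
  induction r with
  | zero =>
    rcases step_spec t (initS t) (a 0) 0 (inv_init t ht) with h | h
    · right; rw [stAfter_eq]; exact h
    · left; exact won_score t a b hb (by rw [stAfter_eq]; exact h)
  | succ r ih =>
    rcases ih with h | h
    · exact Or.inl h
    · rcases step_spec t (stAfter t a r) (a (r + 1)) (r + 1) h with h' | h'
      · right; rw [stAfter_eq]; exact h'
      · left; exact won_score t a b hb (r := r + 1) (by rw [stAfter_eq]; exact h')

lemma no_inv_late (h : Inv t (stAfter t a (m0 t * m0 t + 1)) (m0 t * m0 t + 2)) : False := by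
  obtain ⟨hM, -⟩ := h
  have hsub : (stAfter t a (m0 t * m0 t + 1)).H ⊆
      (P0 t ×ˢ P0 t).image (fun q : VX t × VX t => s(q.1, q.2)) := by
    intro e he
    obtain ⟨u, v, hu, hv, -, rfl⟩ := hM.hEdges e he
    exact Finset.mem_image.mpr ⟨(u, v), Finset.mem_product.mpr ⟨hu, hv⟩, rfl⟩
  have h1 := Finset.card_le_card hsub
  have h2 := Finset.card_image_le (s := P0 t ×ˢ P0 t)
    (f := fun q : VX t × VX t => s(q.1, q.2))
  rw [Finset.card_product, card_P0] at h2
  rw [hM.hHcard] at h1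
  omega

end Play

theorem bobwins (ht : 1 ≤ t) : BobWins (⊤ : SimpleGraph (VX t)) t := by
  refine ⟨BStrat t, fun a b hC _ => bob_legal t a b hC, fun a b hC _ => ?_⟩
  rcases main_ind t a b hC ht (m0 t * m0 t + 1) with h | h
  · exact h
  · exact absurd h (no_inv_late t a)

end VEProof

/-- The vertex-edge coloring number of complete graphs is unbounded: for every `s` there
is an `n` with `col_ve(K_n) ≥ s`. -/
theorem colVE_complete_unbounded :
    ∀ s : ℕ, ∃ n : ℕ, (s : ℕ∞) ≤ colVE (⊤ : SimpleGraph (Fin n)) := by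
  intro s
  match s with
  | 0 => exact ⟨1, by simp⟩
  | 1 =>
    refine ⟨1, ?_⟩
    rw [colVE]
    calc ((1 : ℕ) : ℕ∞) = 0 + 1 := by simp
    _ ≤ _ := add_le_add zero_le le_rfl
  | (k + 2) =>
    set t := k + 1 with htdef
    refine ⟨VEProof.nn t, ?_⟩
    have hw : BobWins (⊤ : SimpleGraph (Fin (VEProof.nn t))) t :=
      VEProof.bobwins t (by omega)
    have h1 : ((t : ℕ) : ℕ∞) ≤ ⨆ s ∈ {s : ℕ | BobWins (⊤ : SimpleGraph (Fin (VEProof.nn t))) s}, (s : ℕ∞) :=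
      le_biSup (f := fun s : ℕ => (s : ℕ∞)) hw
    rw [colVE]
    have : ((k + 2 : ℕ) : ℕ∞) = ((t : ℕ) : ℕ∞) + 1 := by
      rw [htdef]; push_cast; ring
    rw [this]
    exact add_le_add h1 le_rfl
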